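/- arXiv:1506.07019 — 3 statements merged into one kernel-verified Lean document; each statement's English description precedes it below -/
import Mathlib

section
/- Let Ω ⊆ ℂ be a domain and let d be a distance function on Ω that is continuous as a map Ω × Ω → ℝ with respect to the Euclidean topology and that is inner. Then the metric topology induced by d on Ω coincides with the Euclidean subspace topology on Ω: a set U ⊆ Ω is open for d if and only if it is open in the Euclidean subspace topology. -/
open Set Filter

/-- The `d`-length of the path `γ` restricted to `[0, T]`: the supremum, over all
partitions `0 = t₀ < t₁ < ⋯ < t_k = T`, of `Σ d(γ(t_{i-1}), γ(t_i))`. -/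
noncomputable def dLength (d : ℂ → ℂ → ℝ) (γ : ℝ → ℂ) (T : ℝ) : ENNReal :=
  ⨆ (k : ℕ) (t : Fin (k + 1) → ℝ) (_ : StrictMono t) (_ : t 0 = 0)
    (_ : t (Fin.last k) = T),
    ENNReal.ofReal (∑ i : Fin k, d (γ (t i.castSucc)) (γ (t i.succ)))

/-- `d` is a distance function on `Ω`. -/
def IsDistOn (Ω : Set ℂ) (d : ℂ → ℂ → ℝ) : Prop :=
  (∀ x ∈ Ω, ∀ y ∈ Ω, (d x y = 0 ↔ x = y)) ∧
  (∀ x ∈ Ω, ∀ y ∈ Ω, d x y = d y x) ∧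
  (∀ x ∈ Ω, ∀ y ∈ Ω, ∀ z ∈ Ω, d x z ≤ d x y + d y z)

/-- `d` is an inner distance on `Ω`: `d x y` is the infimum of the `d`-lengths of
continuous paths in `Ω` from `x` to `y`. -/
def IsInnerOn (Ω : Set ℂ) (d : ℂ → ℂ → ℝ) : Prop :=
  ∀ x ∈ Ω, ∀ y ∈ Ω,
    ENNReal.ofReal (d x y) =
      ⨅ (γ : ℝ → ℂ) (_ : ContinuousOn γ (Icc 0 1)) (_ : MapsTo γ (Icc 0 1) Ω)
        (_ : γ 0 = x) (_ : γ 1 = y), dLength d γ 1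

lemma dLength_lb (d : ℂ → ℂ → ℝ) (γ : ℝ → ℂ) {t : ℝ} (ht0 : 0 < t) (ht1 : t < 1) :
    ENNReal.ofReal (d (γ 0) (γ t) + d (γ t) (γ 1)) ≤ dLength d γ 1 := by
  rw [dLength]
  refine le_iSup_of_le 2 ?_
  refine le_iSup_of_le ![0, t, 1] ?_
  have hmono : StrictMono (![0, t, 1] : Fin 3 → ℝ) := by
    intro i j hij
    fin_cases i <;> fin_cases j <;> simp_all
  refine le_iSup_of_le hmono ?_
  refine le_iSup_of_le (by simp) ?_
  refine le_iSup_of_le (by simp [Fin.last]) ?_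
  apply le_of_eq
  congr 1
  simp [Fin.sum_univ_two]

/-- A continuous inner distance on a domain `Ω ⊆ ℂ` induces the Euclidean subspace
topology on `Ω`: a subset `U ⊆ Ω` is `d`-open iff it is Euclidean-open in `Ω`. -/
theorem inner_distance_topology (Ω : Set ℂ) (hΩopen : IsOpen Ω)
    (hΩconn : IsConnected Ω) (d : ℂ → ℂ → ℝ) (hdist : IsDistOn Ω d)
    (hcont : ContinuousOn (fun p : ℂ × ℂ => d p.1 p.2) (Ω ×ˢ Ω))
    (hinner : IsInnerOn Ω d) :
    ∀ U ⊆ Ω, ((∀ x ∈ U, ∃ ε > 0, ∀ y ∈ Ω, d x y < ε → y ∈ U) ↔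
      ∃ V : Set ℂ, IsOpen V ∧ U = V ∩ Ω) := by
  obtain ⟨heq, hsymm, htri⟩ := hdist
  -- continuity of `d x ·` on `Ω`
  have hcontx : ∀ x ∈ Ω, ContinuousOn (fun y => d x y) Ω := by
    intro x hx
    have : ContinuousOn (fun y : ℂ => (x, y)) Ω :=
      (continuous_const.prodMk continuous_id).continuousOn
    exact hcont.comp this (fun y hy => ⟨hx, hy⟩)
  have hnonneg : ∀ x ∈ Ω, ∀ y ∈ Ω, 0 ≤ d x y := by
    intro x hx y hy
    have h0 : d x x = 0 := (heq x hx x hx).mpr rfl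
    have h1 := htri x hx y hy x hx
    have h2 := hsymm x hx y hy
    rw [h0] at h1
    linarith
  intro U hUΩ
  constructor
  · -- d-open → Euclidean open
    intro hU
    refine ⟨U, ?_, (inter_eq_left.mpr hUΩ).symm⟩
    rw [isOpen_iff_forall_mem_open]
    intro x hx
    obtain ⟨ε, hε, hball⟩ := hU x hx
    have hxΩ := hUΩ hx
    refine ⟨Ω ∩ (fun y => d x y) ⁻¹' Iio ε, ?_, ?_, ?_⟩
    · rintro z ⟨hzΩ, hz⟩
      exact hball z hzΩ hz
    · exact (hcontx x hxΩ).isOpen_inter_preimage hΩopen isOpen_Iio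
    · refine ⟨hxΩ, ?_⟩
      simp only [mem_preimage, mem_Iio, (heq x hxΩ x hxΩ).mpr rfl]
      exact hε
  · -- Euclidean open → d-open
    rintro ⟨V, hV, rfl⟩
    intro x hx
    obtain ⟨hxV, hxΩ⟩ := hx
    -- choose a closed ball inside V ∩ Ω
    obtain ⟨r, hr, hball⟩ := Metric.nhds_basis_closedBall.mem_iff.mp
      ((hV.inter hΩopen).mem_nhds ⟨hxV, hxΩ⟩)
    have hsphΩ : Metric.sphere x r ⊆ Ω := fun z hz =>
      (hball (Metric.sphere_subset_closedBall hz)).2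
    -- minimum of `d x ·` on the sphere
    obtain ⟨z, hzsph, hzmin⟩ := (isCompact_sphere x r).exists_isMinOn
      (NormedSpace.sphere_nonempty.mpr hr.le)
      ((hcontx x hxΩ).mono hsphΩ)
    have hzΩ : z ∈ Ω := hsphΩ hzsph
    have hzx : z ≠ x := by
      intro h
      rw [h] at hzsph
      simp [Metric.mem_sphere] at hzsph
      exact hr.ne hzsph
    have hm : 0 < d x z := by
      rcases lt_or_eq_of_le (hnonneg x hxΩ z hzΩ) with h | h
      · exact h
      · exact absurd (((heq x hxΩ z hzΩ).mp h.symm).symm) hzx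
    refine ⟨d x z, hm, ?_⟩
    intro y hyΩ hdy
    by_contra hyU
    -- y is outside the closed ball
    have hyball : y ∉ Metric.closedBall x r := fun h => hyU (hball h)
    rw [Metric.mem_closedBall, not_le] at hyball
    -- get a path of d-length < d x z
    have hlt : (⨅ (γ : ℝ → ℂ) (_ : ContinuousOn γ (Icc 0 1)) (_ : MapsTo γ (Icc 0 1) Ω)
        (_ : γ 0 = x) (_ : γ 1 = y), dLength d γ 1) < ENNReal.ofReal (d x z) := by
      rw [← hinner x hxΩ y hyΩ]
      exact ENNReal.ofReal_lt_ofReal_iff hm |>.mpr hdy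
    simp only [iInf_lt_iff] at hlt
    obtain ⟨γ, hγc, hγm, hγ0, hγ1, hγlen⟩ := hlt
    -- the path crosses the sphere
    have hf : ContinuousOn (fun t => dist (γ t) x) (Icc 0 1) :=
      (continuous_id.dist continuous_const).comp_continuousOn hγc
    have hivt := intermediate_value_Icc (by norm_num : (0:ℝ) ≤ 1) hf
    have hrmem : r ∈ Icc (dist (γ 0) x) (dist (γ 1) x) := by
      rw [hγ0, hγ1, dist_self]
      exact ⟨hr.le, hyball.le⟩
    obtain ⟨t, htmem, htr⟩ := hivt hrmem
    have ht0 : 0 < t := by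
      rcases lt_or_eq_of_le htmem.1 with h | h
      · exact h
      · exfalso
        subst h
        simp only [hγ0, dist_self] at htr
        exact hr.ne' htr.symm
    have ht1 : t < 1 := by
      rcases lt_or_eq_of_le htmem.2 with h | h
      · exact h
      · exfalso
        subst h
        simp only [hγ1] at htr
        linarith
    have hγtΩ : γ t ∈ Ω := hγm htmem
    have hγtsph : γ t ∈ Metric.sphere x r := by rwa [Metric.mem_sphere]
    have hmin : d x z ≤ d x (γ t) := hzmin hγtsph
    have hle : ENNReal.ofReal (d x z) ≤ dLength d γ 1 := by
      calc ENNReal.ofReal (d x z)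
          ≤ ENNReal.ofReal (d (γ 0) (γ t) + d (γ t) (γ 1)) := by
            apply ENNReal.ofReal_le_ofReal
            rw [hγ0, hγ1]
            have := hnonneg (γ t) hγtΩ y hyΩ
            linarith
        _ ≤ dLength d γ 1 := dLength_lb d γ ht0 ht1
    exact absurd (lt_of_le_of_lt hle hγlen) (lt_irrefl _)
end

section
/- (Hopf–Rinow) Let Ω ⊆ ℂ be a domain and let d be a distance function on Ω that is continuous as a map Ω × Ω → ℝ with respect to the Euclidean topology and that is inner. Then (Ω, d) is a complete metric space (every d-Cauchy sequence converges in Ω) if and only if for every x ∈ Ω and every r > 0 the closed ball {y ∈ Ω : d(x,y) ≤ r} is compact. -/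
open Set Filter

lemma dLength_zero (d : ℂ → ℂ → ℝ) (γ : ℝ → ℂ) : dLength d γ 0 = 0 := by
  refine le_antisymm ?_ zero_le
  refine iSup_le fun k => iSup_le fun t => iSup_le fun hm => iSup_le fun h0 => iSup_le fun hl => ?_
  rcases Nat.eq_zero_or_pos k with hk | hk
  · subst hk; simp
  · exfalso
    have h01 : (0 : Fin (k+1)) < Fin.last k := by
      rw [Fin.lt_def]; simpa using hk
    have := hm h01
    rw [h0, hl] at this
    exact lt_irrefl _ this

lemma dLength_snoc (d : ℂ → ℂ → ℝ) (γ : ℝ → ℂ) {t b : ℝ} (htb : t < b)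
    {k : ℕ} (P : Fin (k+1) → ℝ) (hm : StrictMono P) (h0 : P 0 = 0)
    (hl : P (Fin.last k) = t) :
    ENNReal.ofReal ((∑ i : Fin k, d (γ (P i.castSucc)) (γ (P i.succ))) + d (γ t) (γ b))
      ≤ dLength d γ b := by
  set Q : Fin (k+2) → ℝ := Fin.snoc P b with hQ
  have hQcast : ∀ i : Fin (k+1), Q i.castSucc = P i := fun i => by simp [Q]
  have hQlast : Q (Fin.last (k+1)) = b := by simp [Q]
  have hQm : StrictMono Q := by
    rw [Fin.strictMono_iff_lt_succ]
    intro i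
    induction i using Fin.lastCases with
    | last =>
      rw [hQcast, Fin.succ_last, hQlast, hl]
      exact htb
    | cast j =>
      rw [hQcast, Fin.succ_castSucc, hQcast]
      exact hm (Fin.castSucc_lt_succ : j.castSucc < j.succ)
  have hQ0 : Q 0 = 0 := by
    rw [show (0 : Fin (k+2)) = Fin.castSucc (0 : Fin (k+1)) from (Fin.castSucc_zero).symm,
      hQcast, h0]
  have hsum : (∑ i : Fin (k+1), d (γ (Q i.castSucc)) (γ (Q i.succ)))
      = (∑ i : Fin k, d (γ (P i.castSucc)) (γ (P i.succ))) + d (γ t) (γ b) := by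
    rw [Fin.sum_univ_castSucc]
    congr 1
    · refine Finset.sum_congr rfl fun j _ => ?_
      rw [Fin.succ_castSucc, hQcast, hQcast]
    · rw [Fin.succ_last, hQlast, hQcast, hl]
  calc ENNReal.ofReal ((∑ i : Fin k, d (γ (P i.castSucc)) (γ (P i.succ))) + d (γ t) (γ b))
      = ENNReal.ofReal (∑ i : Fin (k+1), d (γ (Q i.castSucc)) (γ (Q i.succ))) := by rw [hsum]
    _ ≤ dLength d γ b :=
        le_iSup_of_le (k+1) <| le_iSup_of_le Q <| le_iSup_of_le hQm <|
          le_iSup_of_le hQ0 <| le_iSup_of_le hQlast le_rfl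

lemma dLength_mono (d : ℂ → ℂ → ℝ) (γ : ℝ → ℂ)
    (hnn : ∀ s ∈ Icc (0:ℝ) 1, ∀ t ∈ Icc (0:ℝ) 1, 0 ≤ d (γ s) (γ t))
    {a b : ℝ} (hab : a ≤ b) (hb : b ≤ 1) :
    dLength d γ a ≤ dLength d γ b := by
  rcases eq_or_lt_of_le hab with rfl | hab'
  · exact le_rfl
  refine iSup_le fun k => iSup_le fun P => iSup_le fun hm => iSup_le fun h0 => iSup_le fun hl => ?_
  have ha0 : 0 ≤ a := by
    rw [← h0, ← hl]; exact hm.monotone (Fin.zero_le _)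
  have hmem : ∀ i : Fin (k+1), P i ∈ Icc (0:ℝ) 1 := by
    intro i
    constructor
    · rw [← h0]; exact hm.monotone (Fin.zero_le i)
    · calc P i ≤ P (Fin.last k) := hm.monotone (Fin.le_last i)
        _ ≤ 1 := by rw [hl]; linarith
  refine le_trans ?_ (dLength_snoc d γ hab' P hm h0 hl)
  apply ENNReal.ofReal_le_ofReal
  have : 0 ≤ d (γ a) (γ b) := hnn a ⟨ha0, by linarith⟩ b ⟨by linarith, hb⟩
  linarith

lemma const_strictMono : StrictMono (fun _ : Fin 1 => (0:ℝ)) := by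
  intro i j h
  exact absurd (Subsingleton.elim i j) (ne_of_lt h)

lemma dLength_add_le (d : ℂ → ℂ → ℝ) (γ : ℝ → ℂ)
    (hnn : ∀ s ∈ Icc (0:ℝ) 1, ∀ t ∈ Icc (0:ℝ) 1, 0 ≤ d (γ s) (γ t))
    {a b : ℝ} (ha : 0 ≤ a) (hab : a < b) (hb : b ≤ 1) :
    dLength d γ a + ENNReal.ofReal (d (γ a) (γ b)) ≤ dLength d γ b := by
  set c := ENNReal.ofReal (d (γ a) (γ b)) with hc
  have hcb : c ≤ dLength d γ b := by
    rcases eq_or_lt_of_le ha with rfl | h0a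
    · have := dLength_snoc d γ hab (fun _ : Fin 1 => (0:ℝ)) const_strictMono rfl rfl
      simpa using this
    · have hm2 : StrictMono ![ (0:ℝ), a ] := by
        rw [Fin.strictMono_iff_lt_succ]
        intro i
        fin_cases i
        simpa using h0a
      have := dLength_snoc d γ hab ![ (0:ℝ), a ] hm2 rfl rfl
      refine le_trans ?_ this
      apply ENNReal.ofReal_le_ofReal
      have h1 : 0 ≤ d (γ 0) (γ a) := hnn 0 ⟨le_rfl, zero_le_one⟩ a ⟨ha, by linarith⟩
      have hsum : (∑ i : Fin 1, d (γ (![ (0:ℝ), a ] i.castSucc)) (γ (![ (0:ℝ), a ] i.succ)))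
          = d (γ 0) (γ a) := by simp
      rw [hsum]
      linarith
  have h1 : dLength d γ a ≤ dLength d γ b - c := by
    refine iSup_le fun k => iSup_le fun P => iSup_le fun hm => iSup_le fun h0 => iSup_le fun hl => ?_
    refine ENNReal.le_sub_of_add_le_right ENNReal.ofReal_ne_top ?_
    have hmem : ∀ i : Fin (k+1), P i ∈ Icc (0:ℝ) 1 := by
      intro i
      constructor
      · rw [← h0]; exact hm.monotone (Fin.zero_le i)
      · calc P i ≤ P (Fin.last k) := hm.monotone (Fin.le_last i)
          _ ≤ 1 := by rw [hl]; linarith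
    have hsnn : 0 ≤ ∑ i : Fin k, d (γ (P i.castSucc)) (γ (P i.succ)) :=
      Finset.sum_nonneg fun i _ => hnn _ (hmem _) _ (hmem _)
    have hdnn : 0 ≤ d (γ a) (γ b) :=
      hnn a ⟨ha, by linarith⟩ b ⟨by linarith, hb⟩
    have h2 := dLength_snoc d γ hab P hm h0 hl
    rwa [ENNReal.ofReal_add hsnn hdnn] at h2
  calc dLength d γ a + c ≤ (dLength d γ b - c) + c := add_le_add_left h1 c
    _ = dLength d γ b := tsub_add_cancel_of_le hcb

lemma dist_le_dLength (d : ℂ → ℂ → ℝ) (γ : ℝ → ℂ)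
    (hnn : ∀ s ∈ Icc (0:ℝ) 1, ∀ t ∈ Icc (0:ℝ) 1, 0 ≤ d (γ s) (γ t))
    {s : ℝ} (hs : 0 < s) (hs1 : s ≤ 1) :
    ENNReal.ofReal (d (γ 0) (γ s)) ≤ dLength d γ s := by
  have := dLength_add_le d γ hnn le_rfl hs hs1
  rwa [dLength_zero, zero_add] at this

lemma d_nonneg {Ω : Set ℂ} {d : ℂ → ℂ → ℝ} (hdist : IsDistOn Ω d)
    {x y : ℂ} (hx : x ∈ Ω) (hy : y ∈ Ω) : 0 ≤ d x y := by
  obtain ⟨he, hs, ht⟩ := hdist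
  have h1 : d x x = 0 := (he x hx x hx).mpr rfl
  have h2 : d x x ≤ d x y + d y x := ht x hx y hy x hx
  rw [hs y hy x hx] at h2
  linarith

lemma exists_path {Ω : Set ℂ} {d : ℂ → ℂ → ℝ} (hinner : IsInnerOn Ω d)
    {x y : ℂ} (hx : x ∈ Ω) (hy : y ∈ Ω) {η : ℝ} (hη : 0 < η) :
    ∃ γ : ℝ → ℂ, ContinuousOn γ (Icc 0 1) ∧ MapsTo γ (Icc 0 1) Ω ∧ γ 0 = x ∧ γ 1 = y ∧
      dLength d γ 1 < ENNReal.ofReal (d x y) + ENNReal.ofReal η := by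
  have h := hinner x hx y hy
  have hlt : (⨅ (γ : ℝ → ℂ) (_ : ContinuousOn γ (Icc 0 1)) (_ : MapsTo γ (Icc 0 1) Ω)
      (_ : γ 0 = x) (_ : γ 1 = y), dLength d γ 1)
      < ENNReal.ofReal (d x y) + ENNReal.ofReal η := by
    rw [← h]
    exact ENNReal.lt_add_right ENNReal.ofReal_ne_top (ENNReal.ofReal_pos.mpr hη).ne'
  simp only [iInf_lt_iff] at hlt
  obtain ⟨γ, h1, h2, h3, h4, h5⟩ := hlt
  exact ⟨γ, h1, h2, h3, h4, h5⟩

lemma dball_sub {Ω : Set ℂ} {d : ℂ → ℂ → ℝ} (hdist : IsDistOn Ω d)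
    (hcont : ContinuousOn (fun p : ℂ × ℂ => d p.1 p.2) (Ω ×ˢ Ω))
    (hinner : IsInnerOn Ω d)
    {x : ℂ} (hx : x ∈ Ω) {ε : ℝ} (hε : 0 < ε)
    (hball : Metric.closedBall x ε ⊆ Ω) :
    ∃ δ > 0, ∀ y ∈ Ω, d x y < δ → dist x y ≤ ε := by
  obtain ⟨heq, hsym, htri⟩ := hdist
  have hsph : IsCompact (Metric.sphere x ε) := isCompact_sphere x ε
  have hne : (Metric.sphere x ε).Nonempty := by
    refine ⟨x + ε, ?_⟩
    rw [Metric.mem_sphere, dist_eq_norm]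
    simp [abs_of_pos hε]
  have hsub : Metric.sphere x ε ⊆ Ω := fun b hb => hball (Metric.sphere_subset_closedBall hb)
  have hcontΩ : ContinuousOn (fun b => d x b) Ω := by
    have h2 : Continuous (fun b : ℂ => ((x, b) : ℂ × ℂ)) := continuous_const.prodMk continuous_id
    exact hcont.comp h2.continuousOn (fun b hb => ⟨hx, hb⟩)
  obtain ⟨b₀, hb₀s, hmin⟩ := hsph.exists_isMinOn hne (hcontΩ.mono hsub)
  set δ := d x b₀ with hδdef
  have hδpos : 0 < δ := by
    rcases lt_or_eq_of_le (d_nonneg ⟨heq, hsym, htri⟩ hx (hsub hb₀s)) with h | h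
    · exact h
    · exfalso
      have hxb : x = b₀ := (heq x hx b₀ (hsub hb₀s)).mp h.symm
      have : dist b₀ x = ε := hb₀s
      rw [← hxb, dist_self] at this
      exact hε.ne this
  refine ⟨δ, hδpos, fun y hy hdy => ?_⟩
  by_contra hgt
  push_neg at hgt
  have key : ENNReal.ofReal δ ≤ ENNReal.ofReal (d x y) := by
    rw [hinner x hx y hy]
    refine le_iInf fun γ => le_iInf fun hγc => le_iInf fun hγm => le_iInf fun hγ0 =>
      le_iInf fun hγ1 => ?_
    have hnn : ∀ s ∈ Icc (0:ℝ) 1, ∀ t ∈ Icc (0:ℝ) 1, 0 ≤ d (γ s) (γ t) :=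
      fun s hs t ht => d_nonneg ⟨heq, hsym, htri⟩ (hγm hs) (hγm ht)
    have hcd : ContinuousOn (fun t => dist x (γ t)) (Icc (0:ℝ) 1) :=
      (continuous_const.dist continuous_id).comp_continuousOn hγc
    have hεmem : ε ∈ Icc (dist x (γ 0)) (dist x (γ 1)) := by
      rw [hγ0, hγ1, dist_self]
      exact ⟨hε.le, hgt.le⟩
    obtain ⟨s, hsI, hsval0⟩ := intermediate_value_Icc zero_le_one hcd hεmem
    have hsval : dist x (γ s) = ε := hsval0
    have hs0 : (0:ℝ) < s := by
      rcases lt_or_eq_of_le hsI.1 with h | h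
      · exact h
      · exfalso
        rw [← h, hγ0, dist_self] at hsval
        exact hε.ne hsval
    have hsph' : γ s ∈ Metric.sphere x ε := by
      rw [Metric.mem_sphere, dist_comm]
      exact hsval
    have hδle : δ ≤ d x (γ s) := hmin hsph'
    calc ENNReal.ofReal δ ≤ ENNReal.ofReal (d x (γ s)) := ENNReal.ofReal_le_ofReal hδle
      _ = ENNReal.ofReal (d (γ 0) (γ s)) := by rw [hγ0]
      _ ≤ dLength d γ s := dist_le_dLength d γ hnn hs0 hsI.2
      _ ≤ dLength d γ 1 := dLength_mono d γ hnn hsI.2 le_rfl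
  have : δ ≤ d x y :=
    (ENNReal.ofReal_le_ofReal_iff (d_nonneg ⟨heq, hsym, htri⟩ hx hy)).mp key
  linarith

lemma exists_mid {Ω : Set ℂ} {d : ℂ → ℂ → ℝ} (hdist : IsDistOn Ω d)
    (hcont : ContinuousOn (fun p : ℂ × ℂ => d p.1 p.2) (Ω ×ˢ Ω))
    (hinner : IsInnerOn Ω d)
    {x y : ℂ} (hx : x ∈ Ω) (hy : y ∈ Ω) {r δ : ℝ} (hr : 0 ≤ r) (hδ : 0 < δ) :
    ∃ z ∈ Ω, d x z ≤ r ∧ d z y ≤ max (d x y - r) 0 + δ := by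
  obtain ⟨heq, hsym, htri⟩ := hdist
  by_cases hcase : d x y ≤ r
  · refine ⟨y, hy, hcase, ?_⟩
    rw [(heq y hy y hy).mpr rfl]
    have : (0:ℝ) ≤ max (d x y - r) 0 := le_max_right _ _
    linarith
  push_neg at hcase
  obtain ⟨γ, hγc, hγm, hγ0, hγ1, hL⟩ := exists_path hinner hx hy (half_pos hδ)
  have hnn : ∀ s ∈ Icc (0:ℝ) 1, ∀ t ∈ Icc (0:ℝ) 1, 0 ≤ d (γ s) (γ t) :=
    fun s hs t ht => d_nonneg ⟨heq, hsym, htri⟩ (hγm hs) (hγm ht)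
  set A : Set ℝ := {t | t ∈ Icc (0:ℝ) 1 ∧ dLength d γ t ≤ ENNReal.ofReal r} with hA
  have h0A : (0:ℝ) ∈ A := ⟨⟨le_rfl, zero_le_one⟩, by rw [dLength_zero]; exact zero_le⟩
  have hAne : A.Nonempty := ⟨0, h0A⟩
  have hAbdd : BddAbove A := ⟨1, fun t ht => ht.1.2⟩
  set s := sSup A with hsdef
  have hs0 : 0 ≤ s := le_csSup hAbdd h0A
  have hs1 : s ≤ 1 := csSup_le hAne fun t ht => ht.1.2
  set z := γ s with hzdef
  have hzΩ : z ∈ Ω := hγm ⟨hs0, hs1⟩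
  have hcont_z : ∀ η > (0:ℝ), ∃ δt > (0:ℝ), ∀ t ∈ Icc (0:ℝ) 1, |t - s| < δt →
      d (γ t) z < η ∧ d z (γ t) < η := by
    intro η hη
    have hdzc : ContinuousWithinAt (fun w => d w z) Ω z := by
      have h1 : ContinuousWithinAt (fun p : ℂ × ℂ => d p.1 p.2) (Ω ×ˢ Ω) (z, z) :=
        hcont (z, z) ⟨hzΩ, hzΩ⟩
      have h2 : ContinuousWithinAt (fun w : ℂ => ((w, z) : ℂ × ℂ)) Ω z :=
        (continuous_id.prodMk continuous_const).continuousWithinAt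
      exact ContinuousWithinAt.comp (g := fun p : ℂ × ℂ => d p.1 p.2) (f := fun w : ℂ => ((w, z) : ℂ × ℂ)) h1 h2 (fun w hw => Set.mk_mem_prod hw hzΩ)
    rw [Metric.continuousWithinAt_iff] at hdzc
    obtain ⟨δe, hδe, hde⟩ := hdzc η hη
    have hγct : ContinuousWithinAt γ (Icc (0:ℝ) 1) s := hγc s ⟨hs0, hs1⟩
    rw [Metric.continuousWithinAt_iff] at hγct
    obtain ⟨δt, hδt, hdt⟩ := hγct δe hδe
    refine ⟨δt, hδt, fun t htI htd => ?_⟩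
    have h3 : dist (γ t) z < δe := hdt htI (by rwa [Real.dist_eq])
    have h4 := hde (hγm htI) h3
    have hdzz : d z z = 0 := (heq z hzΩ z hzΩ).mpr rfl
    rw [hdzz, Real.dist_0_eq_abs] at h4
    have h5 : d (γ t) z < η := lt_of_le_of_lt (le_abs_self _) h4
    exact ⟨h5, by rwa [hsym z hzΩ (γ t) (hγm htI)]⟩
  have hdxz : d x z ≤ r := by
    by_contra hgt
    push_neg at hgt
    obtain ⟨δt, hδt, hnear⟩ := hcont_z ((d x z - r)/2) (by linarith)
    obtain ⟨t, htA, hts⟩ := exists_lt_of_lt_csSup hAne (by linarith : s - δt < s)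
    have htle : t ≤ s := le_csSup hAbdd htA
    have htI : t ∈ Icc (0:ℝ) 1 := htA.1
    have h1 : d x (γ t) ≤ r := by
      rcases lt_or_eq_of_le htI.1 with h | h
      · have h2 := dist_le_dLength d γ hnn h htI.2
        rw [hγ0] at h2
        have h3 := le_trans h2 htA.2
        exact (ENNReal.ofReal_le_ofReal_iff hr).mp h3
      · rw [← h, hγ0, (heq x hx x hx).mpr rfl]
        exact hr
    have h2 : d (γ t) z < (d x z - r)/2 :=
      (hnear t htI (by rw [abs_sub_lt_iff]; constructor <;> linarith)).1
    have h3 : d x z ≤ d x (γ t) + d (γ t) z := htri x hx (γ t) (hγm htI) z hzΩ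
    linarith
  have hdzy : d z y ≤ (d x y - r) + δ := by
    rcases lt_or_eq_of_le hs1 with hslt | hseq
    · obtain ⟨δt, hδt, hnear⟩ := hcont_z (δ/2) (half_pos hδ)
      set t := s + min δt (1 - s) / 2 with htdef
      have hmin0 : 0 < min δt (1 - s) := lt_min hδt (by linarith)
      have h1 : s < t := by rw [htdef]; linarith
      have h2 : t < 1 := by
        have : min δt (1 - s) ≤ 1 - s := min_le_right _ _
        rw [htdef]; linarith
      have h3 : |t - s| < δt := by
        have : min δt (1 - s) ≤ δt := min_le_left _ _
        rw [htdef, abs_sub_lt_iff]; constructor <;> linarith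
      have htI : t ∈ Icc (0:ℝ) 1 := ⟨by linarith, h2.le⟩
      have htnA : t ∉ A := fun hmem => absurd (le_csSup hAbdd hmem) (not_le.mpr h1)
      have hft : ENNReal.ofReal r < dLength d γ t := by
        by_contra hc
        push_neg at hc
        exact htnA ⟨htI, hc⟩
      have hkey : dLength d γ t + ENNReal.ofReal (d (γ t) y) ≤ dLength d γ 1 := by
        have h4 := dLength_add_le d γ hnn (by linarith : (0:ℝ) ≤ t) h2 le_rfl
        rwa [hγ1] at h4
      have hchain : ENNReal.ofReal r + ENNReal.ofReal (d (γ t) y)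
          ≤ ENNReal.ofReal (d x y) + ENNReal.ofReal (δ/2) :=
        le_trans (add_le_add_left hft.le _) (le_trans hkey hL.le)
      have hdty_nn : 0 ≤ d (γ t) y := d_nonneg ⟨heq, hsym, htri⟩ (hγm htI) hy
      have hdxy_nn : 0 ≤ d x y := d_nonneg ⟨heq, hsym, htri⟩ hx hy
      rw [← ENNReal.ofReal_add hr hdty_nn, ← ENNReal.ofReal_add hdxy_nn (by linarith)] at hchain
      have hreal : r + d (γ t) y ≤ d x y + δ/2 :=
        (ENNReal.ofReal_le_ofReal_iff (by linarith)).mp hchain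
      have h5 : d z (γ t) < δ/2 := (hnear t htI h3).2
      calc d z y ≤ d z (γ t) + d (γ t) y := htri z hzΩ (γ t) (hγm htI) y hy
        _ ≤ δ/2 + (d x y + δ/2 - r) := by linarith
        _ = (d x y - r) + δ := by ring
    · have hzy : z = y := by rw [hzdef, hseq, hγ1]
      rw [hzy, (heq y hy y hy).mpr rfl]
      linarith
  refine ⟨z, hzΩ, hdxz, ?_⟩
  rw [max_eq_left (by linarith : (0:ℝ) ≤ d x y - r)]
  exact hdzy

structure HRPt (Ω : Set ℂ) : Type where
  val : ℂ
  mem : val ∈ Ω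

/-- **Hopf–Rinow.** For a continuous inner distance `d` on a domain `Ω ⊆ ℂ`, the metric
space `(Ω, d)` is complete iff every closed `d`-ball `{y ∈ Ω : d x y ≤ r}` is compact. -/
theorem hopf_rinow (Ω : Set ℂ) (hΩopen : IsOpen Ω)
    (hΩconn : IsConnected Ω) (d : ℂ → ℂ → ℝ) (hdist : IsDistOn Ω d)
    (hcont : ContinuousOn (fun p : ℂ × ℂ => d p.1 p.2) (Ω ×ˢ Ω))
    (hinner : IsInnerOn Ω d) :
    (∀ u : ℕ → ℂ, (∀ n, u n ∈ Ω) →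
        (∀ ε > 0, ∃ N : ℕ, ∀ m ≥ N, ∀ n ≥ N, d (u m) (u n) < ε) →
        ∃ x ∈ Ω, ∀ ε > 0, ∃ N : ℕ, ∀ n ≥ N, d (u n) x < ε) ↔
      (∀ x ∈ Ω, ∀ r > (0:ℝ), IsCompact {y ∈ Ω | d x y ≤ r}) := by
  obtain ⟨heq, hsym, htri⟩ := id hdist
  letI T : TopologicalSpace (HRPt Ω) := TopologicalSpace.induced HRPt.val inferInstance
  have hemb : Topology.IsEmbedding (HRPt.val (Ω := Ω)) :=
    ⟨⟨rfl⟩, fun a b h => by cases a; cases b; simpa using h⟩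
  have hrange : Set.range (HRPt.val (Ω := Ω)) = Ω := by
    ext w
    constructor
    · rintro ⟨q, rfl⟩; exact q.mem
    · intro hw; exact ⟨⟨w, hw⟩, rfl⟩
  have hopen_iff : ∀ s : Set (HRPt Ω), IsOpen s ↔
      ∀ p ∈ s, ∃ ε > 0, ∀ q : HRPt Ω, d p.val q.val < ε → q ∈ s := by
    intro s
    constructor
    · intro hs p hp
      obtain ⟨U, hU, hsU⟩ := isOpen_induced_iff.mp hs
      have hpU : p.val ∈ U ∩ Ω := ⟨by rw [← hsU] at hp; exact hp, p.mem⟩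
      obtain ⟨εe, hεe, hballe⟩ := Metric.isOpen_iff.mp (hU.inter hΩopen) p.val hpU
      have hcb : Metric.closedBall p.val (εe/2) ⊆ Ω :=
        (Metric.closedBall_subset_ball (by linarith)).trans (hballe.trans inter_subset_right)
      obtain ⟨δ, hδ, hd⟩ := dball_sub hdist hcont hinner p.mem (half_pos hεe) hcb
      refine ⟨δ, hδ, fun q hq => ?_⟩
      have h1 : dist p.val q.val ≤ εe/2 := hd q.val q.mem hq
      have h2 : q.val ∈ Metric.ball p.val εe := by
        rw [Metric.mem_ball, dist_comm]
        linarith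
      rw [← hsU]
      exact (hballe h2).1
    · intro h
      rw [isOpen_iff_mem_nhds]
      intro p hp
      obtain ⟨ε, hε, hball⟩ := h p hp
      have hcontp : Continuous (fun q : HRPt Ω => d p.val q.val) := by
        have hcΩ : ContinuousOn (fun w : ℂ => d p.val w) Ω := by
          have h2 : Continuous (fun b : ℂ => ((p.val, b) : ℂ × ℂ)) :=
            continuous_const.prodMk continuous_id
          exact hcont.comp h2.continuousOn (fun b hb => ⟨p.mem, hb⟩)
        exact hcΩ.comp_continuous hemb.continuous (fun q => q.mem)
      have hopen2 : IsOpen ((fun q : HRPt Ω => d p.val q.val) ⁻¹' Iio ε) :=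
        hcontp.isOpen_preimage _ isOpen_Iio
      refine Filter.mem_of_superset (hopen2.mem_nhds ?_) ?_
      · show d p.val p.val < ε
        rw [(heq _ p.mem _ p.mem).mpr rfl]
        exact hε
      · exact fun q hq => hball q hq
  letI M : MetricSpace (HRPt Ω) := MetricSpace.ofDistTopology (fun a b => d a.val b.val)
    (fun a => (heq _ a.mem _ a.mem).mpr rfl)
    (fun a b => hsym _ a.mem _ b.mem)
    (fun a b c => htri _ a.mem _ b.mem _ c.mem)
    hopen_iff
    (fun a b h => by cases a; cases b; simpa using (heq _ ‹_› _ ‹_›).mp h)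
  have hdist_eq : ∀ a b : HRPt Ω, dist a b = d a.val b.val := fun a b => rfl
  -- local compactness
  have hloc : ∀ p : HRPt Ω, ∃ ρ > (0:ℝ), IsCompact (Metric.closedBall p ρ) := by
    intro p
    obtain ⟨εe, hεe, hballe⟩ := Metric.isOpen_iff.mp hΩopen p.val p.mem
    have hcb : Metric.closedBall p.val (εe/2) ⊆ Ω :=
      (Metric.closedBall_subset_ball (by linarith)).trans hballe
    obtain ⟨δ, hδ, hd⟩ := dball_sub hdist hcont hinner p.mem (half_pos hεe) hcb
    refine ⟨δ/2, half_pos hδ, ?_⟩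
    have hsubset : Metric.closedBall p (δ/2) ⊆ HRPt.val ⁻¹' (Metric.closedBall p.val (εe/2)) := by
      intro q hq
      rw [Metric.mem_closedBall] at hq
      have h1 : d p.val q.val < δ := by
        rw [hsym _ p.mem _ q.mem]
        calc (d q.val p.val : ℝ) ≤ δ/2 := hq
          _ < δ := by linarith
      have h2 := hd q.val q.mem h1
      show q.val ∈ Metric.closedBall p.val (εe/2)
      rw [Metric.mem_closedBall, dist_comm]
      exact h2
    have hcpt : IsCompact (HRPt.val ⁻¹' (Metric.closedBall p.val (εe/2)) : Set (HRPt Ω)) := by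
      rw [hemb.isCompact_iff, Set.image_preimage_eq_inter_range, hrange,
        inter_eq_self_of_subset_left hcb]
      exact isCompact_closedBall _ _
    exact hcpt.of_isClosed_subset Metric.isClosed_closedBall hsubset
  -- midpoint lemma, metric form
  have hmid : ∀ (p q : HRPt Ω) (r δ : ℝ), 0 ≤ r → 0 < δ →
      ∃ z : HRPt Ω, dist p z ≤ r ∧ dist z q ≤ max (dist p q - r) 0 + δ := by
    intro p q r δ hr hδ
    obtain ⟨z, hzΩ, h1, h2⟩ := exists_mid hdist hcont hinner p.mem q.mem hr hδ
    exact ⟨⟨z, hzΩ⟩, h1, h2⟩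
  -- all closed balls compact, given completeness
  have hcompact_balls : CompleteSpace (HRPt Ω) → ∀ (p : HRPt Ω) (r : ℝ),
      IsCompact (Metric.closedBall p r) := by
    intro hcomp p r
    haveI := hcomp
    by_contra hnc
    set NC := {r : ℝ | ¬ IsCompact (Metric.closedBall p r)} with hNC
    have hNCne : NC.Nonempty := ⟨r, hnc⟩
    obtain ⟨ρ, hρ, hρc⟩ := hloc p
    have hmono : ∀ {r₁ r₂ : ℝ}, r₁ ≤ r₂ → IsCompact (Metric.closedBall p r₂) →
        IsCompact (Metric.closedBall p r₁) := fun h hc =>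
      hc.of_isClosed_subset Metric.isClosed_closedBall (Metric.closedBall_subset_closedBall h)
    have hlow : ∀ r' ∈ NC, ρ ≤ r' := fun r' hr' =>
      le_of_not_gt fun hlt => hr' (hmono hlt.le hρc)
    have hbdd : BddBelow NC := ⟨ρ, hlow⟩
    set R := sInf NC with hRdef
    have hRge : ρ ≤ R := le_csInf hNCne hlow
    have hRpos : 0 < R := lt_of_lt_of_le hρ hRge
    have hRlow : ∀ r' : ℝ, r' < R → IsCompact (Metric.closedBall p r') := by
      intro r' hr'
      by_contra hc
      exact absurd (csInf_le hbdd hc) (not_le.mpr hr')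
    have hRc : IsCompact (Metric.closedBall p R) := by
      have htb : TotallyBounded (Metric.closedBall p R) := by
        rw [Metric.totallyBounded_iff]
        intro ε hε
        set η := min (R/2) (ε/4) with hη
        have hηpos : 0 < η := lt_min (half_pos hRpos) (by linarith)
        have hη4 : η ≤ ε/4 := min_le_right _ _
        have hηR : η ≤ R/2 := min_le_left _ _
        have hcpt' := hRlow (R - η) (by linarith)
        obtain ⟨t, htf, hcover⟩ :=
          Metric.totallyBounded_iff.mp hcpt'.totallyBounded (ε/2) (half_pos hε)
        refine ⟨t, htf, fun q hq => ?_⟩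
        rw [Metric.mem_closedBall] at hq
        obtain ⟨z, hz1, hz2⟩ := hmid p q (R - η) η (by linarith) hηpos
        have hq' : dist p q ≤ R := by rw [dist_comm]; exact hq
        have hz2' : dist z q ≤ 2*η := by
          have hmaxle : max (dist p q - (R - η)) 0 ≤ η := max_le (by linarith) hηpos.le
          calc dist z q ≤ max (dist p q - (R - η)) 0 + η := hz2
            _ ≤ η + η := add_le_add_left hmaxle η
            _ = 2*η := by ring
        have hzmem : z ∈ Metric.closedBall p (R - η) := by
          rw [Metric.mem_closedBall, dist_comm]; exact hz1
        obtain ⟨w, hw, hwz⟩ := Set.mem_iUnion₂.mp (hcover hzmem)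
        refine Set.mem_iUnion₂.mpr ⟨w, hw, ?_⟩
        rw [Metric.mem_ball] at hwz ⊢
        have hqz : dist q z ≤ 2*η := by rw [dist_comm]; exact hz2'
        calc dist q w ≤ dist q z + dist z w := dist_triangle _ _ _
          _ < ε := by linarith
      exact htb.isCompact_of_isClosed Metric.isClosed_closedBall
    have hchoice : ∀ z : HRPt Ω, ∃ ρz : ℝ, 0 < ρz ∧ IsCompact (Metric.closedBall z ρz) := by
      intro z; obtain ⟨ρz, h1, h2⟩ := hloc z; exact ⟨ρz, h1, h2⟩
    choose ρf hρf hρfc using hchoice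
    have hcov : Metric.closedBall p R ⊆ ⋃ z ∈ Metric.closedBall p R, Metric.ball z (ρf z / 2) :=
      fun z hz => Set.mem_biUnion hz (Metric.mem_ball_self (half_pos (hρf z)))
    obtain ⟨sc, hs_sub, hs_fin, hs_cover⟩ := hRc.elim_finite_subcover_image
      (fun z _ => Metric.isOpen_ball) hcov
    have hpmem : p ∈ Metric.closedBall p R := Metric.mem_closedBall_self hRpos.le
    have hsne : sc.Nonempty := by
      obtain ⟨z, hzs, -⟩ := Set.mem_iUnion₂.mp (hs_cover hpmem)
      exact ⟨z, hzs⟩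
    set F := hs_fin.toFinset with hF
    have hFne : F.Nonempty := by
      rw [hF, Set.Finite.toFinset_nonempty]; exact hsne
    set ε0 := F.inf' hFne (fun z => ρf z / 8) with hε0
    have hε0pos : 0 < ε0 := by
      rw [hε0, Finset.lt_inf'_iff]
      intro z _
      linarith [hρf z]
    have hbig : Metric.closedBall p (R + ε0) ⊆ ⋃ z ∈ sc, Metric.closedBall z (ρf z) := by
      intro q hq
      rw [Metric.mem_closedBall] at hq
      obtain ⟨z, hz1, hz2⟩ := hmid p q R ε0 hRpos.le hε0pos
      have hzmem : z ∈ Metric.closedBall p R := by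
        rw [Metric.mem_closedBall, dist_comm]; exact hz1
      obtain ⟨w, hw, hwz⟩ := Set.mem_iUnion₂.mp (hs_cover hzmem)
      rw [Metric.mem_ball] at hwz
      refine Set.mem_iUnion₂.mpr ⟨w, hw, ?_⟩
      rw [Metric.mem_closedBall]
      have hq' : dist p q ≤ R + ε0 := by rw [dist_comm]; exact hq
      have h2 : dist z q ≤ 2*ε0 := by
        have hmaxle : max (dist p q - R) 0 ≤ ε0 := max_le (by linarith) hε0pos.le
        calc dist z q ≤ max (dist p q - R) 0 + ε0 := hz2
          _ ≤ 2*ε0 := by linarith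
      have hεw : ε0 ≤ ρf w / 8 := by
        rw [hε0]
        exact Finset.inf'_le _ (by rw [hF, Set.Finite.mem_toFinset]; exact hw)
      have hqz : dist q z ≤ 2*ε0 := by rw [dist_comm]; exact h2
      calc dist q w ≤ dist q z + dist z w := dist_triangle _ _ _
        _ ≤ 2*ε0 + ρf w / 2 := by linarith
        _ ≤ ρf w := by linarith
    have hcptU : IsCompact (⋃ z ∈ sc, Metric.closedBall z (ρf z)) :=
      hs_fin.isCompact_biUnion fun z _ => hρfc z
    have hRε : IsCompact (Metric.closedBall p (R + ε0)) :=
      hcptU.of_isClosed_subset Metric.isClosed_closedBall hbig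
    obtain ⟨r', hr'NC, hr'lt⟩ := exists_lt_of_csInf_lt hNCne (by linarith : R < R + ε0)
    exact hr'NC (hmono hr'lt.le hRε)
  constructor
  · intro hcomp_seq x hxΩ r hr
    have hcomp : CompleteSpace (HRPt Ω) := by
      apply Metric.complete_of_cauchySeq_tendsto
      intro u hu
      rw [Metric.cauchySeq_iff] at hu
      obtain ⟨w, hwΩ, hw⟩ := hcomp_seq (fun n => (u n).val) (fun n => (u n).mem) hu
      refine ⟨⟨w, hwΩ⟩, ?_⟩
      rw [Metric.tendsto_atTop]
      intro ε hε
      obtain ⟨N, hN⟩ := hw ε hε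
      exact ⟨N, fun n hn => hN n hn⟩
    have hc := hcompact_balls hcomp ⟨x, hxΩ⟩ r
    have himg : HRPt.val '' (Metric.closedBall (⟨x, hxΩ⟩ : HRPt Ω) r) = {y ∈ Ω | d x y ≤ r} := by
      ext w
      constructor
      · rintro ⟨q, hq, rfl⟩
        refine ⟨q.mem, ?_⟩
        rw [Metric.mem_closedBall] at hq
        rw [hsym x hxΩ q.val q.mem]
        exact hq
      · rintro ⟨hwΩ, hdw⟩
        refine ⟨⟨w, hwΩ⟩, ?_, rfl⟩
        rw [Metric.mem_closedBall]
        show d w x ≤ r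
        rw [← hsym x hxΩ w hwΩ]
        exact hdw
    rw [← himg]
    exact hc.image hemb.continuous
  · intro hcpt u huΩ hucauchy
    have hcomp : CompleteSpace (HRPt Ω) := by
      apply Metric.complete_of_cauchySeq_tendsto
      intro v hv
      obtain ⟨N, hN⟩ := (Metric.cauchySeq_iff.mp hv) 1 one_pos
      have hball : IsCompact (Metric.closedBall (v N) 1) := by
        have h1 := hcpt (v N).val (v N).mem 1 one_pos
        have hpre : Metric.closedBall (v N) 1
            = HRPt.val ⁻¹' {y ∈ Ω | d (v N).val y ≤ 1} := by
          ext q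
          rw [Metric.mem_closedBall]
          constructor
          · intro hq
            refine ⟨q.mem, ?_⟩
            rw [hsym _ (v N).mem _ q.mem]
            exact hq
          · rintro ⟨-, hq⟩
            show d q.val (v N).val ≤ 1
            rw [← hsym _ (v N).mem _ q.mem]
            exact hq
        rw [hpre, hemb.isCompact_iff, Set.image_preimage_eq_inter_range, hrange,
          inter_eq_self_of_subset_left (sep_subset _ _)]
        exact h1
      have hmem : ∀ k : ℕ, v (N + k) ∈ Metric.closedBall (v N) 1 := by
        intro k
        rw [Metric.mem_closedBall]
        exact (hN (N + k) (Nat.le_add_right _ _) N le_rfl).le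
      obtain ⟨a, _, φ, hφmono, hφtend⟩ := hball.tendsto_subseq hmem
      refine ⟨a, tendsto_nhds_of_cauchySeq_of_subseq hv ?_ hφtend⟩
      have hsm : StrictMono (fun k => N + φ k) := fun i j hij => by
        dsimp only
        exact Nat.add_lt_add_left (hφmono hij) N
      exact hsm.tendsto_atTop
    haveI := hcomp
    obtain ⟨a, ha⟩ := cauchySeq_tendsto_of_complete
      (Metric.cauchySeq_iff.mpr hucauchy : CauchySeq (fun n => (⟨u n, huΩ n⟩ : HRPt Ω)))
    refine ⟨a.val, a.mem, ?_⟩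
    rw [Metric.tendsto_atTop] at ha
    intro ε hε
    obtain ⟨N, hN⟩ := ha ε hε
    exact ⟨N, fun n hn => hN n hn⟩
end

section
/- (Landau's theorem, with bound 1/2) Let f : ℂ → ℂ be continuous on the closed unit disc {z : |z| ≤ 1} and holomorphic on 𝔻, with |f'(0)| = 1. Then for every R with 0 < R < 1/2 there exists z₀ ∈ ℂ such that {w ∈ ℂ : |w − z₀| < R} ⊆ f(𝔻). -/
open Complex Metric Set

local notation "conj'" => starRingEnd ℂ

section Helpers



lemma one_sub_ne_zero_of_norm_lt {x : ℂ} (h : ‖x‖ < 1) : (1 : ℂ) - x ≠ 0 := by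
  intro h0
  have : (1 : ℂ) = x := by linear_combination h0
  rw [← this] at h; simp at h

lemma normSq_mobius_identity (a w : ℂ) :
    normSq (1 - conj' a * w) - normSq (w - a) = (1 - normSq a) * (1 - normSq w) := by
  simp only [normSq_apply, mul_re, mul_im, sub_re, sub_im, one_re, one_im, conj_re, conj_im]
  ring

lemma mobius_hasDerivAt (a w : ℂ) (h : 1 - conj' a * w ≠ 0) :
    HasDerivAt (fun z => (z - a) / (1 - conj' a * z))
      (((1 - normSq a : ℝ) : ℂ) / (1 - conj' a * w) ^ 2) w := by
  have h1 : HasDerivAt (fun z : ℂ => z - a) 1 w := (hasDerivAt_id w).sub_const a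
  have h2 : HasDerivAt (fun z : ℂ => 1 - conj' a * z) (-(conj' a)) w := by
    simpa using ((hasDerivAt_id w).const_mul (conj' a)).const_sub 1
  have := h1.div h2 h
  refine this.congr_deriv ?_
  have : ((normSq a : ℝ) : ℂ) = conj' a * a := by
    rw [mul_comm, Complex.mul_conj]
  rw [Complex.ofReal_sub, Complex.ofReal_one, this]
  ring

/-- CORE: a Schwarz–Pick-type quotient cannot have a local maximum with value > 1. -/
lemma core_contradiction (Θ : ℂ → ℂ) (c : ℝ) (hc : 1 < c) (ε₀ : ℝ) (hε₀ : 0 < ε₀)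
    (hΘ : DifferentiableOn ℂ Θ (ball (0:ℂ) ε₀))
    (h0 : Θ 0 = 0)
    (hder : ‖deriv Θ 0‖ = c)
    (hineq : ∀ ζ ∈ ball (0:ℂ) ε₀, ‖deriv Θ ζ‖ * (1 - normSq ζ) ≤ c * (1 - normSq (Θ ζ))) :
    False := by
  have h0mem : (0 : ℂ) ∈ ball (0:ℂ) ε₀ := by simpa [hε₀]
  have hball : ball (0:ℂ) ε₀ ∈ nhds (0:ℂ) := isOpen_ball.mem_nhds h0mem
  have hd0 : HasDerivAt Θ (deriv Θ 0) 0 := ((hΘ.differentiableAt hball).hasDerivAt)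
  -- little-o estimate
  have hlo := hasDerivAt_iff_isLittleO.mp hd0
  have hbound := hlo.bound (show (0:ℝ) < (c - 1) / 2 by linarith)
  rw [Metric.eventually_nhds_iff] at hbound
  obtain ⟨δ, hδ, hub⟩ := hbound
  set c' : ℝ := (c + 1) / 2 with hc'def
  have hc1 : 1 < c' := by simp [hc'def]; linarith
  have hcpos : 0 < c := by linarith
  -- choose ε
  obtain ⟨ε, hεpos, hεδ, hεε₀, hε1⟩ : ∃ ε : ℝ, 0 < ε ∧ ε < δ ∧ ε < ε₀ ∧ ε < 1 / 2 := by
    refine ⟨min (δ/2) (min (ε₀/2) (1/4)), by positivity, ?_, ?_, ?_⟩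
    · calc min (δ/2) (min (ε₀/2) (1/4)) ≤ δ/2 := min_le_left _ _
        _ < δ := by linarith
    · calc min (δ/2) (min (ε₀/2) (1/4)) ≤ ε₀/2 := le_trans (min_le_right _ _) (min_le_left _ _)
        _ < ε₀ := by linarith
    · calc min (δ/2) (min (ε₀/2) (1/4)) ≤ 1/4 := le_trans (min_le_right _ _) (min_le_right _ _)
        _ < 1/2 := by norm_num
  -- on the sphere of radius ε, ‖Θ ζ‖ ≥ c' ε
  have hsphere : ∀ ζ : ℂ, ‖ζ‖ = ε → ‖deriv Θ ζ‖ ≤ c * (1 - c' ^ 2 * ε ^ 2) / (1 - ε ^ 2) := by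
    intro ζ hζ
    have hζδ : dist ζ 0 < δ := by simpa [hζ] using hεδ
    have hest : ‖Θ ζ - Θ 0 - (ζ - 0) • deriv Θ 0‖ ≤ (c - 1) / 2 * ‖ζ - 0‖ := hub hζδ
    simp only [h0, sub_zero, smul_eq_mul] at hest
    have hΘζ : c' * ε ≤ ‖Θ ζ‖ := by
      have h1 : ‖ζ * deriv Θ 0‖ = c * ε := by
        rw [norm_mul, hder, hζ]; ring
      have h2 := norm_sub_norm_le (ζ * deriv Θ 0) (Θ ζ)
      rw [norm_sub_rev (ζ * deriv Θ 0) (Θ ζ), h1] at h2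
      rw [hζ] at hest
      nlinarith [hest, h2]
    have hnormSq : c' ^ 2 * ε ^ 2 ≤ normSq (Θ ζ) := by
      rw [Complex.normSq_eq_norm_sq]
      nlinarith [hΘζ, norm_nonneg (Θ ζ), mul_pos (by linarith : (0:ℝ) < c') hεpos]
    have hζball : ζ ∈ ball (0:ℂ) ε₀ := by
      simp only [mem_ball, dist_zero_right, hζ]; exact hεε₀
    have := hineq ζ hζball
    have hnsζ : normSq ζ = ε ^ 2 := by
      rw [Complex.normSq_eq_norm_sq, hζ]
    rw [hnsζ] at this
    have h1ε : (0:ℝ) < 1 - ε ^ 2 := by nlinarith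
    rw [le_div_iff₀ h1ε]
    nlinarith [this, hnormSq, norm_nonneg (deriv Θ ζ), hcpos]
  -- maximum principle for deriv Θ on ball 0 ε
  have hA : AnalyticOnNhd ℂ Θ (ball (0:ℂ) ε₀) := hΘ.analyticOnNhd isOpen_ball
  have hAd : AnalyticOnNhd ℂ (deriv Θ) (ball (0:ℂ) ε₀) := hA.deriv
  have hsub : closedBall (0:ℂ) ε ⊆ ball (0:ℂ) ε₀ := closedBall_subset_ball hεε₀
  have hdc : DiffContOnCl ℂ (deriv Θ) (ball (0:ℂ) ε) := by
    constructor
    · exact (hAd.differentiableOn).mono (ball_subset_ball hεε₀.le)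
    · exact (hAd.continuousOn).mono (by
        rw [closure_ball _ (ne_of_gt hεpos)]; exact hsub)
  have hmax : ‖deriv Θ 0‖ ≤ c * (1 - c' ^ 2 * ε ^ 2) / (1 - ε ^ 2) := by
    apply Complex.norm_le_of_forall_mem_frontier_norm_le isBounded_ball hdc
    · intro z hz
      rw [frontier_ball _ (ne_of_gt hεpos)] at hz
      exact hsphere z (by simpa [mem_sphere_iff_norm] using hz)
    · exact subset_closure (by simpa [hεpos])
  rw [hder] at hmax
  have h1ε : (0:ℝ) < 1 - ε ^ 2 := by nlinarith
  rw [le_div_iff₀ h1ε] at hmax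
  nlinarith [hmax, mul_pos (mul_pos (by nlinarith : (0:ℝ) < c' ^ 2 - 1) hcpos)
    (mul_pos hεpos hεpos)]



lemma normSq_pos_of_ne {x : ℂ} (h : x ≠ 0) : 0 < normSq x := normSq_pos.mpr h

lemma mobius_one_sub_normSq (a w : ℂ) (h : 1 - conj' a * w ≠ 0) :
    1 - normSq ((w - a) / (1 - conj' a * w))
      = (1 - normSq a) * (1 - normSq w) / normSq (1 - conj' a * w) := by
  have hd : normSq (1 - conj' a * w) ≠ 0 := ne_of_gt (normSq_pos.mpr h)
  rw [normSq_div]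
  rw [eq_div_iff hd, sub_mul, div_mul_cancel₀ _ hd]
  have : normSq (1 - conj' a * w) - normSq (w - a) = (1 - normSq a) * (1 - normSq w) := by
    simp only [normSq_apply, mul_re, mul_im, sub_re, sub_im, one_re, one_im, conj_re, conj_im]
    ring
  linarith [this]

lemma mobius_deriv_norm (a w : ℂ) (ha : normSq a ≤ 1) :
    ‖(((1 - normSq a : ℝ) : ℂ) / (1 - conj' a * w) ^ 2)‖
      = (1 - normSq a) / normSq (1 - conj' a * w) := by
  rw [norm_div, norm_pow]
  rw [Complex.norm_real, Real.norm_eq_abs, _root_.abs_of_nonneg (by linarith)]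
  congr 1
  rw [Complex.sq_norm]

lemma halfplane_moebius (L : ℂ) (hL : L.re < 0) :
    L - 1 ≠ 0 ∧
    1 - normSq ((L + 1) / (L - 1)) = (-4 * L.re) / normSq (L - 1) := by
  have hne : L - 1 ≠ 0 := by
    intro h
    have : L = 1 := by linear_combination h
    rw [this] at hL; norm_num at hL
  refine ⟨hne, ?_⟩
  have hd : normSq (L - 1) ≠ 0 := ne_of_gt (normSq_pos.mpr hne)
  rw [normSq_div]
  field_simp
  have : normSq (L - 1) - normSq (L + 1) = -4 * L.re := by
    simp only [normSq_apply, add_re, add_im, sub_re, sub_im, one_re, one_im]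
    ring
  linarith [this]

lemma norm_phi_deriv (L G w : ℂ) (ρ : ℝ) (hw : w ≠ 0) (ht : ‖w‖ < ρ)
    (hL : L.re = Real.log ‖w‖ - Real.log ρ) :
    ‖(-2 / (L - 1) ^ 2) * (G / w)‖
      = (1 / (2 * ‖w‖ * (Real.log ρ - Real.log ‖w‖))) * ‖G‖
          * (1 - normSq ((L + 1) / (L - 1))) := by
  have htpos : 0 < ‖w‖ := norm_pos_iff.mpr hw
  have hlog : 0 < Real.log ρ - Real.log ‖w‖ := by
    have := Real.log_lt_log htpos ht
    linarith
  have hLre : L.re < 0 := by rw [hL]; linarith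
  obtain ⟨hne, hid⟩ := halfplane_moebius L hLre
  have hd : normSq (L - 1) ≠ 0 := ne_of_gt (normSq_pos.mpr hne)
  have h2 : ‖(2:ℂ)‖ = 2 := by norm_num
  have hsq : ‖L - 1‖ ^ 2 = normSq (L - 1) := by
    rw [Complex.sq_norm]
  have hLHS : ‖(-2 / (L - 1) ^ 2) * (G / w)‖ = 2 / normSq (L - 1) * (‖G‖ / ‖w‖) := by
    rw [norm_mul, norm_div, norm_div, norm_pow, norm_neg, h2, hsq]
  rw [hLHS, hid, hL]
  have h4 : -4 * (Real.log ‖w‖ - Real.log ρ) = 4 * (Real.log ρ - Real.log ‖w‖) := by ring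
  rw [h4]
  have aux : ∀ t S nq A : ℝ, 0 < t → 0 < S → nq ≠ 0 →
      (1/(2*t*S)) * A * (4*S/nq) = 2/nq * (A/t) := by
    intro t S nq A ht hS hn
    field_simp
    ring
  exact ((aux ‖w‖ (Real.log ρ - Real.log ‖w‖) (normSq (L-1)) ‖G‖ htpos hlog hd).symm).trans
    (by rw [mul_div_assoc])
end Helpers

set_option maxHeartbeats 4000000 in
/-- **Landau's theorem with bound `L ≥ 1/2`.** If `f` is continuous on the closed unit
disc, holomorphic on the open unit disc and `|f'(0)| = 1`, then for every `0 < R < 1/2`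
the image `f(𝔻)` contains an open disc of radius `R`. -/
theorem landau_theorem (f : ℂ → ℂ)
    (hc : ContinuousOn f (Metric.closedBall 0 1))
    (hf : DifferentiableOn ℂ f (Metric.ball 0 1))
    (hderiv : ‖deriv f 0‖ = 1)
    (R : ℝ) (hR0 : 0 < R) (hR : R < 1 / 2) :
    ∃ z₀ : ℂ, Metric.ball z₀ R ⊆ f '' Metric.ball 0 1 := by
  by_contra hcon
  push_neg at hcon
  set Ω : Set ℂ := f '' Metric.ball 0 1 with hΩdef
  set K : Set ℂ := Ωᶜ with hKdef
  -- K is nonempty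
  have hKne : K.Nonempty := by
    obtain ⟨p, -, hp2⟩ := not_subset.mp (hcon 0)
    exact ⟨p, hp2⟩
  -- Ω is open
  have hfa : AnalyticOnNhd ℂ f (ball 0 1) := hf.analyticOnNhd isOpen_ball
  have hΩopen : IsOpen Ω := by
    rcases hfa.is_constant_or_isOpen (convex_ball 0 1).isPreconnected with ⟨w, hw⟩ | hopen
    · exfalso
      have hfeq : f =ᶠ[nhds 0] fun _ => w :=
        Filter.eventually_of_mem (isOpen_ball.mem_nhds (by simp)) hw
      have : deriv f 0 = 0 := by rw [hfeq.deriv_eq, deriv_const]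
      rw [this] at hderiv; simp at hderiv
    · exact hopen _ subset_rfl isOpen_ball
  have hKclosed : IsClosed K := hΩopen.isClosed_compl
  -- complement is R-dense
  have hdK : ∀ w : ℂ, infDist w K < R := by
    intro w
    obtain ⟨q, hq1, hq2⟩ := not_subset.mp (hcon w)
    calc infDist w K ≤ dist w q := infDist_le_dist_of_mem hq2
      _ = dist q w := dist_comm _ _
      _ < R := mem_ball.mp hq1
  -- parameters
  set R' : ℝ := R + (1 - 2*R)/8 with hR'def
  have hR'pos : 0 < R' := by rw [hR'def]; nlinarith
  have hRR' : R < R' := by rw [hR'def]; nlinarith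
  set s : ℝ := (2*R' + 1)/2 with hsdef
  have h2R's : 2*R' < s := by rw [hsdef, hR'def]; nlinarith
  have hs1 : s < 1 := by rw [hsdef, hR'def]; nlinarith
  have hspos : 0 < s := by rw [hsdef]; nlinarith
  set ρ : ℝ := Real.exp 1 * R' with hρdef
  have hρpos : 0 < ρ := by positivity
  have hlogρ : Real.log ρ = 1 + Real.log R' := by
    rw [hρdef, Real.log_mul (Real.exp_ne_zero 1) (ne_of_gt hR'pos), Real.log_exp]
  have hR'ρ : R' < ρ := by
    rw [hρdef]
    nlinarith [Real.exp_one_gt_d9, hR'pos]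
  -- the rescaled function and its derivative
  set fs : ℂ → ℂ := fun z => f ((s:ℂ) * z) with hfsdef
  set g : ℂ → ℂ := fun z => deriv f ((s:ℂ) * z) * (s:ℂ) with hgdef
  have hsmaps : ∀ z : ℂ, ‖z‖ ≤ 1 → ‖(s:ℂ) * z‖ < 1 := by
    intro z hz
    rw [norm_mul, Complex.norm_real, Real.norm_eq_abs, abs_of_pos hspos]
    nlinarith [norm_nonneg z]
  have hgd : ∀ z : ℂ, ‖z‖ ≤ 1 → HasDerivAt fs (g z) z := by
    intro z hz
    have hmem : (s:ℂ) * z ∈ ball (0:ℂ) 1 := by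
      rw [mem_ball_zero_iff]; exact hsmaps z hz
    have hfd : HasDerivAt f (deriv f ((s:ℂ) * z)) ((s:ℂ) * z) :=
      (hf.differentiableAt (isOpen_ball.mem_nhds hmem)).hasDerivAt
    have hlin : HasDerivAt (fun w : ℂ => (s:ℂ) * w) (s:ℂ) z := by
      simpa using (hasDerivAt_id z).const_mul (s:ℂ)
    exact hfd.comp z hlin
  have hfsΩ : ∀ z : ℂ, ‖z‖ ≤ 1 → fs z ∈ Ω := by
    intro z hz
    exact ⟨(s:ℂ) * z, by rw [mem_ball_zero_iff]; exact hsmaps z hz, rfl⟩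
  -- distance function
  set D : ℂ → ℝ := fun z => infDist (fs z) K with hDdef
  have hDpos : ∀ z : ℂ, ‖z‖ ≤ 1 → 0 < D z := by
    intro z hz
    rw [hDdef]
    exact (hKclosed.notMem_iff_infDist_pos hKne).mp (by
      rw [hKdef, mem_compl_iff, not_not]; exact hfsΩ z hz)
  have hDR : ∀ z : ℂ, D z < R := fun z => hdK (fs z)
  -- the conformal density
  set μ : ℝ → ℝ := fun t => 1 / (2 * t * (Real.log ρ - Real.log t)) with hμdef
  have hdenpos : ∀ t : ℝ, t ∈ Ioc (0:ℝ) R' → 0 < 2 * t * (Real.log ρ - Real.log t) := by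
    intro t ht
    have h1 : Real.log t ≤ Real.log R' := Real.log_le_log ht.1 ht.2
    have : 0 < Real.log ρ - Real.log t := by rw [hlogρ]; linarith
    exact mul_pos (mul_pos two_pos ht.1) this
  have hμpos : ∀ t : ℝ, t ∈ Ioc (0:ℝ) R' → 0 < μ t := by
    intro t ht
    rw [hμdef]
    exact div_pos one_pos (hdenpos t ht)
  have hμanti : AntitoneOn μ (Ioc (0:ℝ) R') := by
    have hmono : MonotoneOn (fun t : ℝ => 2 * t * (Real.log ρ - Real.log t)) (Ioc (0:ℝ) R') := by
      have hioc : Ioc (0:ℝ) R' ⊆ ({0}ᶜ : Set ℝ) := by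
        intro t ht; exact ne_of_gt ht.1
      apply monotoneOn_of_deriv_nonneg (convex_Ioc 0 R')
      · exact (continuousOn_const.mul continuousOn_id).mul
          (continuousOn_const.sub (Real.continuousOn_log.mono hioc))
      · rw [interior_Ioc]
        intro t ht
        exact (((hasDerivAt_id t).const_mul 2).mul
          ((Real.hasDerivAt_log (ne_of_gt ht.1)).const_sub (Real.log ρ))).differentiableAt.differentiableWithinAt
      · rw [interior_Ioc]
        intro t ht
        have hd : HasDerivAt (fun t : ℝ => 2 * t * (Real.log ρ - Real.log t))
            (2 * (Real.log ρ - Real.log t) + (2 * t) * (-t⁻¹)) t := by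
          have h1 : HasDerivAt (fun t : ℝ => 2 * t) 2 t := by
            simpa using (hasDerivAt_id t).const_mul (2:ℝ)
          have h2 : HasDerivAt (fun t : ℝ => Real.log ρ - Real.log t) (-t⁻¹) t :=
            (Real.hasDerivAt_log (ne_of_gt ht.1)).const_sub (Real.log ρ)
          have := h1.mul h2
          exact this
        rw [hd.deriv]
        have h1 : Real.log t ≤ Real.log R' := Real.log_le_log ht.1 ht.2.le
        have h2 : (2 * t) * (-t⁻¹) = -2 := by
          field_simp
          rw [div_self (ne_of_gt ht.1)]
        rw [h2, hlogρ]
        linarith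
    intro t1 h1 t2 h2 h12
    rw [hμdef]
    exact one_div_le_one_div_of_le (hdenpos t1 h1) (hmono h1 h2 h12)
  have hμR' : μ R' = 1 / (2 * R') := by
    rw [hμdef]
    have : Real.log ρ - Real.log R' = 1 := by rw [hlogρ]; ring
    simp only [this, mul_one]
  -- the comparison function F
  set F : ℂ → ℝ := fun z => μ (D z) * ‖g z‖ * (1 - normSq z) with hFdef
  have hfsc : ContinuousOn fs (closedBall 0 1) := fun z hz =>
    ((hgd z (mem_closedBall_zero_iff.mp hz)).continuousAt).continuousWithinAt
  have hDc : ContinuousOn D (closedBall 0 1) :=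
    (continuous_infDist_pt K).comp_continuousOn hfsc
  have hgc : ContinuousOn g (closedBall 0 1) := by
    have hdc : ContinuousOn (deriv f) (ball 0 1) := hfa.deriv.continuousOn
    have hmapsto : MapsTo (fun z : ℂ => (s:ℂ) * z) (closedBall 0 1) (ball 0 1) := by
      intro z hz
      rw [mem_ball_zero_iff]
      exact hsmaps z (mem_closedBall_zero_iff.mp hz)
    exact (hdc.comp (continuous_const.mul continuous_id).continuousOn hmapsto).mul
      continuousOn_const
  have hμDc : ContinuousOn (fun z => μ (D z)) (closedBall 0 1) := by
    rw [hμdef]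
    apply continuousOn_const.div
    · exact (continuousOn_const.mul hDc).mul (continuousOn_const.sub
        (hDc.log (fun z hz => ne_of_gt (hDpos z (mem_closedBall_zero_iff.mp hz)))))
    · intro z hz
      exact ne_of_gt (hdenpos (D z) ⟨hDpos z (mem_closedBall_zero_iff.mp hz),
        ((hDR z).trans hRR').le⟩)
  have hFc : ContinuousOn F (closedBall 0 1) :=
    (hμDc.mul hgc.norm).mul (continuousOn_const.sub continuous_normSq.continuousOn)
  obtain ⟨zs, hzsmem, hzsmax⟩ :=
    (isCompact_closedBall (0:ℂ) 1).exists_isMaxOn ⟨0, by simp⟩ hFc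
  have hmax : ∀ z : ℂ, z ∈ closedBall (0:ℂ) 1 → F z ≤ F zs := fun z hz => hzsmax hz
  -- F 0 > 1
  have hg0 : ‖g 0‖ = s := by
    rw [hgdef]
    simp only [mul_zero]
    rw [norm_mul, hderiv, Complex.norm_real, Real.norm_eq_abs,
      abs_of_pos hspos, one_mul]
  have hD0mem : D 0 ∈ Ioc (0:ℝ) R' :=
    ⟨hDpos 0 (by simp), ((hDR 0).trans hRR').le⟩
  have hF0 : 1 < F 0 := by
    have h1 : μ R' ≤ μ (D 0) := hμanti hD0mem ⟨hR'pos, le_refl R'⟩ hD0mem.2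
    rw [hμR'] at h1
    have h2 : F 0 = μ (D 0) * s := by
      rw [hFdef]; simp [hg0]
    rw [h2]
    have h3 : 1 / (2 * R') * s ≤ μ (D 0) * s := by
      apply mul_le_mul_of_nonneg_right h1 hspos.le
    have h4 : 1 < 1 / (2 * R') * s := by
      rw [div_mul_eq_mul_div, one_mul, lt_div_iff₀ (by positivity)]
      linarith
    linarith
  set c : ℝ := F zs with hcdef
  have hc1 : 1 < c := lt_of_lt_of_le hF0 (hmax 0 (by simp))
  have hDzs : D zs ∈ Ioc (0:ℝ) R' :=
    ⟨hDpos zs (mem_closedBall_zero_iff.mp hzsmem), ((hDR zs).trans hRR').le⟩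
  have hzs1 : normSq zs < 1 := by
    by_contra hzn
    push_neg at hzn
    have : F zs ≤ 0 := by
      rw [hFdef]
      apply mul_nonpos_of_nonneg_of_nonpos
      · exact mul_nonneg (hμpos _ hDzs).le (norm_nonneg _)
      · linarith
    linarith
  have hbnorm : ‖zs‖ < 1 := by
    have : ‖zs‖^2 < 1 := by rw [← Complex.sq_norm] at hzs1; exact hzs1
    nlinarith [norm_nonneg zs]
  -- a nearest omitted point
  obtain ⟨p, hpK, hpdist⟩ := hKclosed.exists_infDist_eq_dist hKne (fs zs)
  set v : ℂ := fs zs - p with hvdef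
  have htstar : ‖v‖ = D zs := by
    rw [hvdef, ← dist_eq_norm, hDdef]
    exact hpdist.symm
  have hvne : v ≠ 0 := by
    rw [← norm_pos_iff, htstar]; exact hDzs.1
  -- the local holomorphic data
  set ℓ : ℂ → ℂ := fun z => ((Real.log (‖v‖ / ρ) : ℝ) : ℂ) + Complex.log ((fs z - p) / v)
    with hℓdef
  set Φ : ℂ → ℂ := fun z => (ℓ z + 1) / (ℓ z - 1) with hΦdef
  set Φp : ℂ → ℂ := fun z => (-2 / (ℓ z - 1) ^ 2) * (g z / (fs z - p)) with hΦpdef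
  -- a good neighborhood of zs
  have hev : ∀ᶠ z in nhds zs, ‖z‖ < 1 ∧ ‖fs z - p‖ < R' ∧ ‖(fs z - p) / v - 1‖ < 1/2 := by
    have hfsca : ContinuousAt fs zs := (hgd zs hbnorm.le).continuousAt
    have e1 : ∀ᶠ z in nhds zs, ‖z‖ < 1 :=
      continuous_norm.continuousAt.eventually_lt continuousAt_const hbnorm
    have e2 : ∀ᶠ z in nhds zs, ‖fs z - p‖ < R' := by
      apply ContinuousAt.eventually_lt ((hfsca.sub continuousAt_const).norm) continuousAt_const
      show ‖fs zs - p‖ < R'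
      rw [← hvdef, htstar]
      exact lt_trans (hDR zs) hRR'
    have e3 : ∀ᶠ z in nhds zs, ‖(fs z - p) / v - 1‖ < 1/2 := by
      apply ContinuousAt.eventually_lt
        ((((hfsca.sub continuousAt_const).div_const v).sub continuousAt_const).norm)
        continuousAt_const
      show ‖(fs zs - p) / v - 1‖ < 1/2
      rw [← hvdef, div_self hvne]
      norm_num
    exact e1.and (e2.and e3)
  rw [Metric.eventually_nhds_iff] at hev
  obtain ⟨r, hrpos, hUP⟩ := hev
  -- pointwise facts on the good neighborhood
  have hlocal : ∀ z : ℂ, dist z zs < r →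
      HasDerivAt Φ (Φp z) z ∧ 0 < 1 - normSq (Φ z) ∧
      ‖Φp z‖ * (1 - normSq z) ≤ c * (1 - normSq (Φ z)) ∧
      ‖Φp z‖ = μ ‖fs z - p‖ * ‖g z‖ * (1 - normSq (Φ z)) ∧ normSq z < 1 := by
    intro z hz
    obtain ⟨hz1, hz2, hz3⟩ := hUP hz
    have hz1' : ‖z‖ ≤ 1 := hz1.le
    have hnsz : normSq z < 1 := by
      rw [Complex.normSq_eq_norm_sq]
      nlinarith [norm_nonneg z]
    have hDzpos : 0 < D z := hDpos z hz1'
    have hDzt : D z ≤ ‖fs z - p‖ := by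
      rw [hDdef, ← dist_eq_norm]
      exact infDist_le_dist_of_mem hpK
    have htpos : 0 < ‖fs z - p‖ := lt_of_lt_of_le hDzpos hDzt
    have hfszp : fs z - p ≠ 0 := norm_pos_iff.mp htpos
    have htρ : ‖fs z - p‖ < ρ := lt_trans hz2 hR'ρ
    -- the real part of ℓ
    have hre : (ℓ z).re = Real.log ‖fs z - p‖ - Real.log ρ := by
      simp only [hℓdef, Complex.add_re, Complex.ofReal_re, Complex.log_re]
      have h1 : ‖(fs z - p) / v‖ = ‖fs z - p‖ / ‖v‖ := by
        rw [norm_div]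
      rw [h1, Real.log_div (ne_of_gt htpos) (norm_ne_zero_iff.mpr hvne),
        Real.log_div (norm_ne_zero_iff.mpr hvne) (ne_of_gt hρpos)]
      ring
    have hreneg : (ℓ z).re < 0 := by
      rw [hre]
      have := Real.log_lt_log htpos htρ
      linarith
    obtain ⟨hℓ1ne, honeSub⟩ := halfplane_moebius (ℓ z) hreneg
    -- derivative of ℓ
    have hslit : (fs z - p) / v ∈ Complex.slitPlane := by
      rw [Complex.mem_slitPlane_iff]
      left
      have h1 : |((fs z - p) / v - 1).re| ≤ ‖(fs z - p) / v - 1‖ := by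
        exact Complex.abs_re_le_norm _
      have h2 : ((fs z - p) / v - 1).re = ((fs z - p) / v).re - 1 := by
        simp [Complex.sub_re]
      nlinarith [abs_le.mp (h1.trans hz3.le)]
    have hℓd : HasDerivAt ℓ (g z / (fs z - p)) z := by
      have hq : HasDerivAt (fun z => (fs z - p) / v) (g z / v) z :=
        ((hgd z hz1').sub_const p).div_const v
      have hlog := (Complex.hasDerivAt_log hslit).comp z hq
      have : HasDerivAt ℓ (((fs z - p) / v)⁻¹ * (g z / v)) z := by
        rw [hℓdef]
        exact hlog.const_add _
      convert this using 1
      field_simp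
    -- derivative of Φ
    have hΦd : HasDerivAt Φ (Φp z) z := by
      have h1 : HasDerivAt (fun w => ℓ w + 1) (g z / (fs z - p)) z := hℓd.add_const 1
      have h2 : HasDerivAt (fun w => ℓ w - 1) (g z / (fs z - p)) z := hℓd.sub_const 1
      have := h1.div h2 hℓ1ne
      rw [hΦdef, hΦpdef]
      refine this.congr_deriv ?_
      have hsq : (ℓ z - 1) ^ 2 ≠ 0 := pow_ne_zero _ hℓ1ne
      ring
    have hpos3 : 0 < 1 - normSq (Φ z) := by
      have hnq : 0 < normSq (ℓ z - 1) := normSq_pos.mpr hℓ1ne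
      have : Φ z = (ℓ z + 1) / (ℓ z - 1) := by rw [hΦdef]
      rw [this, honeSub]
      have h4 : 0 < -4 * (ℓ z).re := by linarith
      positivity
    have hnormeq : ‖Φp z‖ = μ ‖fs z - p‖ * ‖g z‖ * (1 - normSq (Φ z)) := by
      have := norm_phi_deriv (ℓ z) (g z) (fs z - p) ρ hfszp htρ hre
      have hμu : μ ‖fs z - p‖
          = 1 / (2 * ‖fs z - p‖ * (Real.log ρ - Real.log ‖fs z - p‖)) := by
        rw [hμdef]
      have hΦu : Φ z = (ℓ z + 1) / (ℓ z - 1) := by rw [hΦdef]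
      have hΦpu : Φp z = (-2 / (ℓ z - 1) ^ 2) * (g z / (fs z - p)) := by rw [hΦpdef]
      rw [hμu, hΦu, hΦpu]
      exact this
    refine ⟨hΦd, hpos3, ?_, hnormeq, hnsz⟩
    -- the master bound
    have hμle : μ ‖fs z - p‖ ≤ μ (D z) :=
      hμanti ⟨hDzpos, ((hDR z).trans hRR').le⟩ ⟨htpos, hz2.le⟩ hDzt
    have hFz : F z ≤ c := hmax z (mem_closedBall_zero_iff.mpr hz1')
    have hgz : (0:ℝ) ≤ ‖g z‖ := norm_nonneg _
    have hnz : (0:ℝ) ≤ 1 - normSq z := by linarith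
    calc ‖Φp z‖ * (1 - normSq z)
        = (μ ‖fs z - p‖ * ‖g z‖ * (1 - normSq z)) * (1 - normSq (Φ z)) := by
          rw [hnormeq]; ring
      _ ≤ (μ (D z) * ‖g z‖ * (1 - normSq z)) * (1 - normSq (Φ z)) := by
          apply mul_le_mul_of_nonneg_right _ hpos3.le
          exact mul_le_mul_of_nonneg_right (mul_le_mul_of_nonneg_right hμle hgz) hnz
      _ = F z * (1 - normSq (Φ z)) := by rw [hFdef]
      _ ≤ c * (1 - normSq (Φ z)) := mul_le_mul_of_nonneg_right hFz hpos3.le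
  -- data at the maximum point
  have hrzs : dist zs zs < r := by simpa [dist_self] using hrpos
  obtain ⟨hΦdzs, hpos3zs, -, hnormeqzs, -⟩ := hlocal zs hrzs
  set α : ℂ := Φ zs with hαdef
  have hα1 : normSq α < 1 := by linarith
  have hα1' : ‖α‖ < 1 := by
    have := hα1
    rw [Complex.normSq_eq_norm_sq] at this
    nlinarith [norm_nonneg α]
  -- the Möbius normalizations
  set χ : ℂ → ℂ := fun ζ => (ζ - (-zs)) / (1 - conj' (-zs) * ζ) with hχdef
  set ψ : ℂ → ℂ := fun w => (w - α) / (1 - conj' α * w) with hψdef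
  set Θ : ℂ → ℂ := fun ζ => ψ (Φ (χ ζ)) with hΘdef
  have hχ0 : χ 0 = zs := by
    rw [hχdef]; simp
  have hχca : ContinuousAt χ 0 :=
    (mobius_hasDerivAt (-zs) 0 (by simp)).continuousAt
  have hev2 : ∀ᶠ ζ in nhds (0:ℂ), dist (χ ζ) zs < r ∧ ‖ζ‖ < 1 := by
    have h1 : Filter.Tendsto χ (nhds 0) (nhds zs) := by
      rw [← hχ0]; exact hχca
    have e1 : ∀ᶠ ζ in nhds (0:ℂ), χ ζ ∈ ball zs r := h1 (Metric.ball_mem_nhds zs hrpos)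
    have e2 : ∀ᶠ ζ in nhds (0:ℂ), ‖ζ‖ < 1 :=
      continuous_norm.continuousAt.eventually_lt continuousAt_const (by norm_num)
    refine (e1.and e2).mono ?_
    intro ζ hζ
    exact ⟨mem_ball.mp hζ.1, hζ.2⟩
  rw [Metric.eventually_nhds_iff] at hev2
  obtain ⟨ε₀, hε₀pos, hball⟩ := hev2
  -- key facts about Θ near 0
  have hkey : ∀ ζ : ℂ, dist ζ 0 < ε₀ →
      DifferentiableAt ℂ Θ ζ ∧
      deriv Θ ζ = (((1 - normSq α : ℝ) : ℂ) / (1 - conj' α * Φ (χ ζ)) ^ 2) *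
        (Φp (χ ζ) * (((1 - normSq (-zs) : ℝ) : ℂ) / (1 - conj' (-zs) * ζ) ^ 2)) ∧
      ‖deriv Θ ζ‖ * (1 - normSq ζ) ≤ c * (1 - normSq (Θ ζ)) := by
    intro ζ hζ
    obtain ⟨hχr, hζ1⟩ := hball hζ
    have hnsζ : normSq ζ < 1 := by
      rw [Complex.normSq_eq_norm_sq]
      nlinarith [norm_nonneg ζ]
    have hdχ : 1 - conj' (-zs) * ζ ≠ 0 := by
      apply one_sub_ne_zero_of_norm_lt
      rw [norm_mul, RCLike.norm_conj, norm_neg]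
      nlinarith [norm_nonneg ζ, norm_nonneg zs]
    obtain ⟨hΦdz, hpos3z, hmaster, hnormeqz, hnszχ⟩ := hlocal (χ ζ) hχr
    have hΦlt : ‖Φ (χ ζ)‖ < 1 := by
      have h := hpos3z
      rw [show normSq (Φ (χ ζ)) = ‖Φ (χ ζ)‖^2 by
        rw [Complex.normSq_eq_norm_sq]] at h
      nlinarith [norm_nonneg (Φ (χ ζ))]
    have hdψ : 1 - conj' α * Φ (χ ζ) ≠ 0 := by
      apply one_sub_ne_zero_of_norm_lt
      rw [norm_mul, RCLike.norm_conj]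
      nlinarith [norm_nonneg α, norm_nonneg (Φ (χ ζ))]
    have hχd : HasDerivAt χ
        (((1 - normSq (-zs) : ℝ) : ℂ) / (1 - conj' (-zs) * ζ) ^ 2) ζ :=
      mobius_hasDerivAt (-zs) ζ hdχ
    have hψd : HasDerivAt ψ
        (((1 - normSq α : ℝ) : ℂ) / (1 - conj' α * Φ (χ ζ)) ^ 2) (Φ (χ ζ)) :=
      mobius_hasDerivAt α (Φ (χ ζ)) hdψ
    have hcomp1 : HasDerivAt (fun ζ => Φ (χ ζ))
        (Φp (χ ζ) * (((1 - normSq (-zs) : ℝ) : ℂ) / (1 - conj' (-zs) * ζ) ^ 2)) ζ :=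
      hΦdz.comp ζ hχd
    have hΘd : HasDerivAt Θ
        ((((1 - normSq α : ℝ) : ℂ) / (1 - conj' α * Φ (χ ζ)) ^ 2) *
          (Φp (χ ζ) * (((1 - normSq (-zs) : ℝ) : ℂ) / (1 - conj' (-zs) * ζ) ^ 2))) ζ :=
      hψd.comp (h₂ := ψ) ζ hcomp1
    refine ⟨hΘd.differentiableAt, hΘd.deriv, ?_⟩
    rw [hΘd.deriv]
    have hψn := mobius_deriv_norm α (Φ (χ ζ)) hα1.le
    have hχn := mobius_deriv_norm (-zs) ζ (by rw [normSq_neg]; exact hzs1.le)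
    have e1 : 1 - normSq (Θ ζ) =
        (1 - normSq α) * (1 - normSq (Φ (χ ζ))) / normSq (1 - conj' α * Φ (χ ζ)) := by
      have h := mobius_one_sub_normSq α (Φ (χ ζ)) hdψ
      rw [hΘdef, hψdef]
      exact h
    have e2 : 1 - normSq (χ ζ) =
        (1 - normSq (-zs)) * (1 - normSq ζ) / normSq (1 - conj' (-zs) * ζ) := by
      have h := mobius_one_sub_normSq (-zs) ζ hdχ
      rw [hχdef]
      exact h
    rw [norm_mul, norm_mul, hψn, hχn, e1]
    have hnqA : 0 < normSq (1 - conj' α * Φ (χ ζ)) := normSq_pos.mpr hdψ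
    have hnqB : 0 < normSq (1 - conj' (-zs) * ζ) := normSq_pos.mpr hdχ
    have hApos : 0 < 1 - normSq α := by linarith
    have hstep : (1 - normSq α) / normSq (1 - conj' α * Φ (χ ζ)) *
        (‖Φp (χ ζ)‖ * (1 - normSq (χ ζ))) ≤
        (1 - normSq α) / normSq (1 - conj' α * Φ (χ ζ)) *
          (c * (1 - normSq (Φ (χ ζ)))) :=
      mul_le_mul_of_nonneg_left hmaster (by positivity)
    calc (1 - normSq α) / normSq (1 - conj' α * Φ (χ ζ)) *
          (‖Φp (χ ζ)‖ * ((1 - normSq (-zs)) / normSq (1 - conj' (-zs) * ζ))) *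
          (1 - normSq ζ)
        = (1 - normSq α) / normSq (1 - conj' α * Φ (χ ζ)) *
            (‖Φp (χ ζ)‖ * (1 - normSq (χ ζ))) := by
          rw [e2]; ring
      _ ≤ (1 - normSq α) / normSq (1 - conj' α * Φ (χ ζ)) *
            (c * (1 - normSq (Φ (χ ζ)))) := hstep
      _ = c * ((1 - normSq α) * (1 - normSq (Φ (χ ζ))) /
            normSq (1 - conj' α * Φ (χ ζ))) := by ring
  -- value of Θ and its derivative at 0
  have hΘ0 : Θ 0 = 0 := by
    rw [hΘdef]
    show ψ (Φ (χ 0)) = 0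
    rw [hχ0, ← hαdef, hψdef]
    show (α - α) / (1 - conj' α * α) = 0
    rw [sub_self, zero_div]
  have h0in : dist (0:ℂ) 0 < ε₀ := by simpa [dist_self] using hε₀pos
  obtain ⟨-, hderiv0eq, -⟩ := hkey 0 h0in
  have hder0 : ‖deriv Θ 0‖ = c := by
    rw [hderiv0eq, hχ0, ← hαdef]
    have hca : conj' α * α = ((normSq α : ℝ) : ℂ) := by
      rw [mul_comm, Complex.mul_conj]
    have hre1 : (1 : ℂ) - conj' α * α = (((1 - normSq α : ℝ)) : ℂ) := by
      rw [hca]; push_cast; ring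
    rw [norm_mul, norm_mul, mobius_deriv_norm α α hα1.le, mobius_deriv_norm (-zs) 0
      (by rw [normSq_neg]; exact hzs1.le)]
    rw [← hvdef] at hnormeqzs
    rw [htstar] at hnormeqzs
    rw [hnormeqzs]
    have hnq1 : normSq (1 - conj' α * α) = (1 - normSq α) * (1 - normSq α) := by
      rw [hre1, Complex.normSq_ofReal]
    have hnq2 : normSq (1 - conj' (-zs) * (0:ℂ)) = 1 := by
      simp
    rw [hnq1, hnq2, normSq_neg]
    have hAne : (1 - normSq α) ≠ 0 := by
      have : normSq α < 1 := hα1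
      intro h; nlinarith
    have hcc : c = μ (D zs) * ‖g zs‖ * (1 - normSq zs) := by
      rw [hcdef, hFdef]
    rw [hcc]
    field_simp
  -- conclude via the core contradiction
  have hΘdiff : DifferentiableOn ℂ Θ (ball (0:ℂ) ε₀) := fun ζ hζ =>
    ((hkey ζ (mem_ball.mp hζ)).1).differentiableWithinAt
  exact core_contradiction Θ c hc1 ε₀ hε₀pos hΘdiff hΘ0 hder0
    (fun ζ hζ => (hkey ζ (mem_ball.mp hζ)).2.2)
end
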